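/- Let N ≥ 1, let f : ℂ^N → ℂ^N be a regular endomorphism of algebraic degree d ≥ 2, and let x ∈ ℂ^N. Then the backward orbit {z ∈ ℂ^N : f^{∘n}(z) = x for some n ≥ 1} is bounded in ℂ^N: there exists R > 0 (depending on f and x) such that every z in the backward orbit of x satisfies ‖z‖ ≤ R. -/

import Mathlib

noncomputable section

/-- The house `C(α)` of an algebraic number `α ∈ ℂ`: the maximum of the absolute values of
the complex roots of its minimal polynomial over `ℚ` (equivalently, of `σ(α)` over all
embeddings `σ : ℚ(α) ↪ ℂ`). -/
def house (α : ℂ) : ℝ :=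
  sSup ((fun β : ℂ => ‖β‖) '' {β : ℂ | Polynomial.aeval β (minpoly ℚ α) = 0})

/-- The self-map of `𝔸^N(ℂ)` induced by an `N`-tuple of polynomials. -/
def evalMap {N : ℕ} (f : Fin N → MvPolynomial (Fin N) ℂ) (z : Fin N → ℂ) : Fin N → ℂ :=
  fun i => MvPolynomial.eval z (f i)

/-- A polynomial has all of its coefficients in the subfield `K` of `ℂ`. -/
def CoeffsIn {n : ℕ} (K : Subfield ℂ) (p : MvPolynomial (Fin n) ℂ) : Prop :=
  ∀ m, MvPolynomial.coeff m p ∈ K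

/-- `z` is preperiodic under `F`. -/
def IsPreperiodicPt {X : Type*} (F : X → X) (z : X) : Prop :=
  ∃ n m : ℕ, 0 < m ∧ F^[n + m] z = F^[n] z

/-- `f = (f_1, …, f_N)` is a regular endomorphism of `𝔸^N` of algebraic degree `d`:
every `f_j` has total degree `d` and the common zero locus of the top-degree homogeneous
parts `f_j^+` is `{0}`. -/
def IsRegularEndo {N : ℕ} (f : Fin N → MvPolynomial (Fin N) ℂ) (d : ℕ) : Prop :=
  (∀ j, (f j).totalDegree = d) ∧
  ∀ z : Fin N → ℂ,
    (∀ j, MvPolynomial.eval z (MvPolynomial.homogeneousComponent d (f j)) = 0) → z = 0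

open MvPolynomial

set_option maxHeartbeats 1000000 in
/-- Growth bound for a polynomial all of whose monomials have degree at most `k`. -/
theorem aux_eval_bound (N k : ℕ) (p : MvPolynomial (Fin N) ℂ)
    (hp : ∀ m ∈ p.support, (m.sum fun _ e => e) ≤ k) :
    ∃ C : ℝ, 0 ≤ C ∧ ∀ z : Fin N → ℂ, ‖eval z p‖ ≤ C * (1 + ‖z‖) ^ k := by
  refine ⟨∑ m ∈ p.support, ‖coeff m p‖, Finset.sum_nonneg fun _ _ => norm_nonneg _, fun z => ?_⟩
  have h1 : (0:ℝ) ≤ 1 + ‖z‖ := by positivity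
  have h1' : (1:ℝ) ≤ 1 + ‖z‖ := by linarith [norm_nonneg z]
  rw [eval_eq']
  calc ‖∑ m ∈ p.support, coeff m p * ∏ i, z i ^ m i‖
      ≤ ∑ m ∈ p.support, ‖coeff m p * ∏ i, z i ^ m i‖ := norm_sum_le _ _
    _ ≤ ∑ m ∈ p.support, ‖coeff m p‖ * (1 + ‖z‖) ^ k := by
        refine Finset.sum_le_sum fun m hm => ?_
        rw [norm_mul]
        refine mul_le_mul_of_nonneg_left ?_ (norm_nonneg _)
        calc ‖∏ i, z i ^ m i‖ = ∏ i, ‖z i ^ m i‖ := norm_prod _ _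
          _ ≤ ∏ i, (1 + ‖z‖) ^ m i := by
              refine Finset.prod_le_prod (fun _ _ => norm_nonneg _) fun i _ => ?_
              rw [norm_pow]
              exact pow_le_pow_left₀ (norm_nonneg _)
                ((norm_le_pi_norm z i).trans (by linarith)) _
          _ = (1 + ‖z‖) ^ (∑ i, m i) := by rw [Finset.prod_pow_eq_pow_sum]
          _ ≤ (1 + ‖z‖) ^ k := by
              apply pow_le_pow_right₀ h1'
              have := hp m hm
              rwa [Finsupp.sum_fintype _ _ (fun _ => rfl)] at this
    _ = (∑ m ∈ p.support, ‖coeff m p‖) * (1 + ‖z‖) ^ k := by rw [Finset.sum_mul]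

/-- Evaluation of a homogeneous polynomial at a scalar multiple. -/
theorem aux_homog_eval_smul (N n : ℕ) (p : MvPolynomial (Fin N) ℂ) (hp : p.IsHomogeneous n)
    (t : ℂ) (z : Fin N → ℂ) : eval (t • z) p = t ^ n * eval z p := by
  rw [eval_eq', eval_eq', Finset.mul_sum]
  refine Finset.sum_congr rfl fun m hm => ?_
  have hc : coeff m p ≠ 0 := by simpa using hm
  have hdeg : ∑ i, m i = n := by
    have := hp hc
    rw [Finsupp.weight_apply] at this
    simp only [Pi.one_apply, smul_eq_mul, mul_one] at this
    rw [Finsupp.sum_fintype _ _ (fun _ => rfl)] at this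
    exact this
  calc coeff m p * ∏ i, (t • z) i ^ m i
      = coeff m p * ∏ i, (t ^ m i * z i ^ m i) := by
        simp [Pi.smul_apply, smul_eq_mul, mul_pow]
    _ = coeff m p * ((∏ i, t ^ m i) * ∏ i, z i ^ m i) := by rw [Finset.prod_mul_distrib]
    _ = t ^ n * (coeff m p * ∏ i, z i ^ m i) := by
        rw [Finset.prod_pow_eq_pow_sum, hdeg]; ring

set_option maxHeartbeats 1000000 in
/-- The backward orbit of any point under a regular endomorphism of `ℂ^N` of algebraic
degree `d ≥ 2` is bounded. -/
theorem backward_orbit_bounded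
    (N : ℕ) (hN : 1 ≤ N)
    (f : Fin N → MvPolynomial (Fin N) ℂ)
    (d : ℕ) (hd : 2 ≤ d) (hreg : IsRegularEndo f d)
    (x : Fin N → ℂ) :
    ∃ R : ℝ, 0 < R ∧ ∀ z : Fin N → ℂ,
      (∃ n : ℕ, 1 ≤ n ∧ (evalMap f)^[n] z = x) → ‖z‖ ≤ R := by
  haveI : Nonempty (Fin N) := ⟨⟨0, hN⟩⟩
  set g : Fin N → MvPolynomial (Fin N) ℂ := fun j => homogeneousComponent d (f j) with hg
  set G : (Fin N → ℂ) → (Fin N → ℂ) := fun z j => eval z (g j) with hG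
  -- continuity of ‖G ·‖
  have hGcont : Continuous fun z => ‖G z‖ :=
    (continuous_pi fun j => MvPolynomial.continuous_eval (g j)).norm
  -- minimum of ‖G‖ on the unit sphere
  have hsph : (Metric.sphere (0 : Fin N → ℂ) 1).Nonempty := by
    refine ⟨fun _ => 1, ?_⟩
    simp [Metric.mem_sphere, dist_eq_norm]
  obtain ⟨u0, hu0, hu0min⟩ := (isCompact_sphere (0 : Fin N → ℂ) 1).exists_isMinOn hsph
    hGcont.continuousOn
  set c : ℝ := ‖G u0‖ with hc
  have hcpos : 0 < c := by
    rw [hc, norm_pos_iff]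
    intro h0
    have : u0 = 0 := hreg.2 u0 fun j => congrFun h0 j
    rw [this] at hu0
    simp at hu0
  -- lower bound ‖G z‖ ≥ c ‖z‖ ^ d
  have hGlow : ∀ z : Fin N → ℂ, z ≠ 0 → c * ‖z‖ ^ d ≤ ‖G z‖ := by
    intro z hz
    have hnz : (0:ℝ) < ‖z‖ := norm_pos_iff.2 hz
    set u : Fin N → ℂ := ((‖z‖ : ℂ))⁻¹ • z with hu
    have hzu : ((‖z‖ : ℂ)) • u = z := by
      rw [hu, smul_smul, mul_inv_cancel₀ (by exact_mod_cast hnz.ne'), one_smul]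
    have hunorm : ‖u‖ = 1 := by
      rw [hu, norm_smul, norm_inv, Complex.norm_real, Real.norm_of_nonneg hnz.le,
        inv_mul_cancel₀ hnz.ne']
    have husph : u ∈ Metric.sphere (0 : Fin N → ℂ) 1 := by
      simp [Metric.mem_sphere, dist_eq_norm, hunorm]
    have hGz : G z = ((‖z‖ : ℂ) ^ d) • G u := by
      funext j
      have h := aux_homog_eval_smul N d (g j) (homogeneousComponent_isHomogeneous d (f j))
        ((‖z‖ : ℂ)) u
      rw [hzu] at h
      simpa [hG, Pi.smul_apply, smul_eq_mul] using h
    have hmin : c ≤ ‖G u‖ := isMinOn_iff.mp hu0min u husph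
    rw [hGz, norm_smul, norm_pow, Complex.norm_real, Real.norm_of_nonneg hnz.le]
    nlinarith [pow_pos hnz d]
  -- remainder bound
  have hrem : ∃ C : ℝ, 0 ≤ C ∧ ∀ (j : Fin N) (z : Fin N → ℂ),
      ‖eval z (f j - g j)‖ ≤ C * (1 + ‖z‖) ^ (d - 1) := by
    have hC : ∀ j : Fin N, ∃ C : ℝ, 0 ≤ C ∧ ∀ z : Fin N → ℂ,
        ‖eval z (f j - g j)‖ ≤ C * (1 + ‖z‖) ^ (d - 1) := by
      intro j
      apply aux_eval_bound
      intro m hm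
      have hcne : coeff m (f j - g j) ≠ 0 := by simpa using hm
      rw [coeff_sub, hg, coeff_homogeneousComponent] at hcne
      by_cases hmd : m.degree = d
      · simp [hmd] at hcne
      · simp only [if_neg hmd, sub_zero] at hcne
        have hle : (m.sum fun _ e => e) ≤ d := by
          rw [← hreg.1 j]
          exact le_totalDegree (by simpa using hcne)
        have hne : (m.sum fun _ e => e) ≠ d := by
          intro h; apply hmd
          rw [Finsupp.degree, ← h]; rfl
        omega
    choose C hC0 hCb using hC
    refine ⟨∑ j, C j, Finset.sum_nonneg fun j _ => hC0 j, fun j z => ?_⟩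
    refine (hCb j z).trans (mul_le_mul_of_nonneg_right ?_ (by positivity))
    exact Finset.single_le_sum (fun i _ => hC0 i) (Finset.mem_univ j)
  obtain ⟨C, hC0, hCb⟩ := hrem
  -- the radius
  refine ⟨max 1 (max ‖x‖ ((1 + C * 2 ^ (d - 1)) / c)), lt_of_lt_of_le one_pos (le_max_left _ _),
    fun z hz => ?_⟩
  set R : ℝ := max 1 (max ‖x‖ ((1 + C * 2 ^ (d - 1)) / c)) with hR
  -- key escape estimate
  have key : ∀ w : Fin N → ℂ, R < ‖w‖ → ‖w‖ ≤ ‖evalMap f w‖ := by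
    intro w hw
    have hw1 : (1:ℝ) ≤ ‖w‖ := le_of_lt (lt_of_le_of_lt (le_max_left _ _) hw)
    have hwpos : (0:ℝ) < ‖w‖ := lt_of_lt_of_le one_pos hw1
    have hwc : 1 + C * 2 ^ (d - 1) ≤ c * ‖w‖ := by
      have : (1 + C * 2 ^ (d - 1)) / c ≤ ‖w‖ :=
        le_of_lt (lt_of_le_of_lt ((le_max_right _ _).trans (le_max_right _ _)) hw)
      rw [div_le_iff₀ hcpos] at this
      linarith [this]
    have hwne : w ≠ 0 := fun h => by simp [h] at hwpos
    -- triangle inequality: G w = evalMap f w - remainder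
    have hHb : ‖(fun j => eval w (f j - g j) : Fin N → ℂ)‖ ≤ C * (1 + ‖w‖) ^ (d - 1) := by
      apply pi_norm_le_iff_of_nonneg (by positivity) |>.2
      intro j
      exact hCb j w
    have hsplit : G w = evalMap f w - fun j => eval w (f j - g j) := by
      funext j
      simp only [hG, evalMap, Pi.sub_apply, map_sub]
      ring
    have htri : ‖G w‖ ≤ ‖evalMap f w‖ + C * (1 + ‖w‖) ^ (d - 1) := by
      rw [hsplit]
      exact (norm_sub_le _ _).trans (add_le_add le_rfl hHb)
    have h2w : (1 + ‖w‖) ^ (d - 1) ≤ 2 ^ (d - 1) * ‖w‖ ^ (d - 1) := by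
      rw [← mul_pow]
      exact pow_le_pow_left₀ (by linarith) (by linarith) _
    have hd1 : ‖w‖ ^ d = ‖w‖ ^ (d - 1) * ‖w‖ := by
      rw [← pow_succ]
      congr 1
      omega
    have hwd1 : ‖w‖ ≤ ‖w‖ ^ (d - 1) := by
      calc ‖w‖ = ‖w‖ ^ 1 := (pow_one _).symm
        _ ≤ ‖w‖ ^ (d - 1) := pow_le_pow_right₀ hw1 (by omega)
    have hpow_pos : (0:ℝ) < ‖w‖ ^ (d - 1) := by positivity
    have hfinal : ‖w‖ ^ (d - 1) * 1 ≤ ‖evalMap f w‖ := by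
      calc ‖w‖ ^ (d - 1) * 1 ≤ ‖w‖ ^ (d - 1) * (c * ‖w‖ - C * 2 ^ (d - 1)) := by
            apply mul_le_mul_of_nonneg_left _ hpow_pos.le
            linarith
        _ = c * ‖w‖ ^ d - C * 2 ^ (d - 1) * ‖w‖ ^ (d - 1) := by rw [hd1]; ring
        _ ≤ ‖G w‖ - C * (1 + ‖w‖) ^ (d - 1) := by
            have := hGlow w hwne
            nlinarith [hC0]
        _ ≤ ‖evalMap f w‖ := by linarith
    calc ‖w‖ ≤ ‖w‖ ^ (d - 1) := hwd1
      _ = ‖w‖ ^ (d - 1) * 1 := (mul_one _).symm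
      _ ≤ ‖evalMap f w‖ := hfinal
  -- conclude by contradiction
  by_contra hcon
  push_neg at hcon
  obtain ⟨n, _, hnx⟩ := hz
  have horb : ∀ k : ℕ, R < ‖(evalMap f)^[k] z‖ := by
    intro k
    induction k with
    | zero => simpa using hcon
    | succ k ih =>
        rw [Function.iterate_succ_apply']
        exact lt_of_lt_of_le ih (key _ ih)
  have := horb n
  rw [hnx] at this
  exact absurd this (not_lt.2 ((le_max_left _ _).trans (le_max_right _ _)))
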